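/- Let L ∈ ℝ^{n×n} be a symmetric positive semidefinite matrix whose eigenvalues are 0 = λ₁ < λ₂ ≤ … ≤ λ_n (i.e., 0 is a simple eigenvalue), let M > 0, D > 0, and let L^{1/2} be the positive semidefinite square root of L. Then the supremum over ω ∈ ℝ \ {0} of the operator norm ‖L^{1/2}(−Mω² I + jDω I + L)^{-1}‖ equals 2M√λ₂/(D·√(4Mλ₂ − D²)) if D² ≤ 2Mλ₂, and equals 1/√λ₂ otherwise. -/

import Mathlib

open Matrix

/-- The positive semidefinite square root of a positive semidefinite matrix, as defined
in Mathlib of December 2024 (removed since; restored here with its old definition). -/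
noncomputable def Matrix.PosSemidef.sqrt {n 𝕜 : Type*} [Fintype n] [RCLike 𝕜] [PartialOrder 𝕜]
    [DecidableEq n]    {A : Matrix n n 𝕜} (hA : A.PosSemidef) : Matrix n n 𝕜 :=
  hA.1.eigenvectorUnitary.1 * diagonal ((↑) ∘ Real.sqrt ∘ hA.1.eigenvalues) *
    (star hA.1.eigenvectorUnitary : Matrix n n 𝕜)

open scoped MatrixOrder in
lemma psd_eq_sqrt_of_sq_eq {n : Type*} [Fintype n] [DecidableEq n] {A B : Matrix n n ℝ}
    (hA : A.PosSemidef) (hB : B.PosSemidef) (hAB : A ^ 2 = B) : A = hB.sqrt := by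
  have h1 : hB.sqrt = cfc Real.sqrt B := by
    rw [hB.1.cfc_eq, Matrix.IsHermitian.cfc, Unitary.conjStarAlgAut_apply]
    rfl
  rw [h1, ← cfcₙ_eq_cfc (hf0 := Real.sqrt_zero), ← CFC.sqrt_eq_real_sqrt B hB.nonneg, eq_comm, CFC.sqrt_eq_iff B A hB.nonneg hA.nonneg,
    ← sq, hAB]

lemma toEuclideanCLM_diagonal_apply {ι : Type*} [Fintype ι] [DecidableEq ι]
    (c : ι → ℂ) (x : EuclideanSpace ℂ ι) (i : ι) :
    (Matrix.toEuclideanCLM (𝕜 := ℂ) (Matrix.diagonal c) x) i = c i * x i := by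
  have := congrFun (Matrix.ofLp_toEuclideanCLM (Matrix.diagonal c) x) i
  simpa [Matrix.toLin'_apply, Matrix.mulVec_diagonal] using this

lemma diag_opNorm_le {ι : Type*} [Fintype ι] [DecidableEq ι]
    (c : ι → ℂ) (b : ℝ) (hb : 0 ≤ b) (h : ∀ i, ‖c i‖ ≤ b) :
    ‖Matrix.toEuclideanCLM (𝕜 := ℂ) (Matrix.diagonal c)‖ ≤ b := by
  refine ContinuousLinearMap.opNorm_le_bound _ hb fun x => ?_
  rw [EuclideanSpace.norm_eq, EuclideanSpace.norm_eq]
  rw [show b * Real.sqrt (∑ i, ‖x i‖ ^ 2) = Real.sqrt (b ^ 2 * ∑ i, ‖x i‖ ^ 2) by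
    rw [Real.sqrt_mul (sq_nonneg b), Real.sqrt_sq hb]]
  apply Real.sqrt_le_sqrt
  rw [Finset.mul_sum]
  refine Finset.sum_le_sum fun i _ => ?_
  rw [toEuclideanCLM_diagonal_apply, norm_mul, mul_pow]
  exact mul_le_mul_of_nonneg_right (pow_le_pow_left₀ (norm_nonneg _) (h i) 2) (sq_nonneg _)

lemma diag_opNorm_ge {ι : Type*} [Fintype ι] [DecidableEq ι]
    (c : ι → ℂ) (i : ι) :
    ‖c i‖ ≤ ‖Matrix.toEuclideanCLM (𝕜 := ℂ) (Matrix.diagonal c)‖ := by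
  have h := (Matrix.toEuclideanCLM (𝕜 := ℂ) (Matrix.diagonal c)).le_opNorm
    (EuclideanSpace.single i 1)
  rw [EuclideanSpace.norm_single, norm_one, mul_one] at h
  refine le_trans ?_ h
  have hx : (Matrix.toEuclideanCLM (𝕜 := ℂ) (Matrix.diagonal c)) (EuclideanSpace.single i 1)
      = EuclideanSpace.single i (c i) := by
    ext j
    rw [toEuclideanCLM_diagonal_apply]
    simp only [EuclideanSpace.single_apply]
    split_ifs with hji
    · rw [hji, mul_one]
    · rw [mul_zero]
  rw [hx, EuclideanSpace.norm_single]

lemma conj_opNorm_eq {ι : Type*} [Fintype ι] [DecidableEq ι]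
    (W A : Matrix ι ι ℂ) (h1 : star W * W = 1) (h2 : W * star W = 1) :
    ‖Matrix.toEuclideanCLM (𝕜 := ℂ) (W * A * star W)‖
      = ‖Matrix.toEuclideanCLM (𝕜 := ℂ) A‖ := by
  have hu : (Matrix.toEuclideanCLM (𝕜 := ℂ) W) ∈
      unitary (EuclideanSpace ℂ ι →L[ℂ] EuclideanSpace ℂ ι) := by
    constructor
    · rw [← map_star, ← _root_.map_mul, h1, _root_.map_one]
    · rw [← map_star, ← _root_.map_mul, h2, _root_.map_one]
  rw [_root_.map_mul, _root_.map_mul, map_star]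
  rw [CStarRing.norm_mul_mem_unitary _ (Unitary.star_mem hu)]
  rw [CStarRing.norm_mem_unitary_mul _ hu]

lemma conj_mul_conj {ι R : Type*} [Fintype ι] [DecidableEq ι] [CommRing R]
    (W U A B : Matrix ι ι R) (h : U * W = 1) :
    (W * A * U) * (W * B * U) = W * (A * B) * U := by
  simp only [Matrix.mul_assoc]
  rw [← Matrix.mul_assoc U W (B * U), h, Matrix.one_mul]

lemma sqrt_form_1 {M D l2 : ℝ} (hM : 0 < M) (hD : 0 < D) (h2 : 0 < l2)
    (hb : D ^ 2 ≤ 2 * M * l2) :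
    2 * M * Real.sqrt l2 / (D * Real.sqrt (4 * M * l2 - D ^ 2))
      = Real.sqrt (4 * M ^ 2 * l2 / (D ^ 2 * (4 * M * l2 - D ^ 2))) := by
  have h4 : 0 < 4 * M * l2 - D ^ 2 := by nlinarith
  rw [Real.sqrt_div (by positivity), Real.sqrt_mul (by positivity),
    show (4:ℝ) * M ^ 2 = (2 * M) ^ 2 by ring, Real.sqrt_sq (by positivity),
    Real.sqrt_mul (by positivity), Real.sqrt_sq hD.le]

lemma key_upper {M D l2 l : ℝ} (hM : 0 < M) (hD : 0 < D) (h2 : 0 < l2)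
    (hle : l2 ≤ l) {x : ℝ} (hx : 0 < x) :
    Real.sqrt l / Real.sqrt ((l - M * x) ^ 2 + D ^ 2 * x) ≤
      (if D ^ 2 ≤ 2 * M * l2 then
        2 * M * Real.sqrt l2 / (D * Real.sqrt (4 * M * l2 - D ^ 2))
      else 1 / Real.sqrt l2) := by
  have hl : 0 < l := lt_of_lt_of_le h2 hle
  have hh : 0 < (l - M * x) ^ 2 + D ^ 2 * x := by positivity
  rw [← Real.sqrt_div hl.le]
  split_ifs with hb
  · have h4 : 0 < 4 * M * l2 - D ^ 2 := by nlinarith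
    rw [sqrt_form_1 hM hD h2 hb]
    apply Real.sqrt_le_sqrt
    rw [div_le_div_iff₀ hh (by positivity)]
    nlinarith [sq_nonneg (2 * M * (l - M * x) - D ^ 2), sq_nonneg (D * (l - l2)),
      mul_nonneg (mul_nonneg h2.le (sq_nonneg D)) (sq_nonneg (2 * M * (l - M * x) - D ^ 2)),
      mul_nonneg (mul_nonneg (sq_nonneg D) (sq_nonneg D)) (sub_nonneg.2 hle)]
  · push_neg at hb
    rw [show (1:ℝ) / Real.sqrt l2 = Real.sqrt (1 / l2) by
      rw [one_div, one_div, Real.sqrt_inv]]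
    apply Real.sqrt_le_sqrt
    rw [div_le_div_iff₀ hh h2]
    rcases le_or_gt (2 * M * l) (D ^ 2) with hc | hc
    · nlinarith [mul_nonneg hx.le (sub_nonneg.2 hc), mul_nonneg hl.le (sub_nonneg.2 hle),
        sq_nonneg (M * x)]
    · nlinarith [sq_nonneg (2 * M ^ 2 * x - 2 * M * l + D ^ 2),
        mul_pos (mul_pos hM hl) (sub_pos.2 hb),
        mul_nonneg (mul_nonneg hM.le hl.le) (sub_nonneg.2 hle)]

lemma f_at_opt {M D l2 : ℝ} (hM : 0 < M) (hD : 0 < D) (h2 : 0 < l2)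
    (hb : D ^ 2 < 2 * M * l2) :
    Real.sqrt l2 / Real.sqrt ((l2 - M * ((2 * M * l2 - D ^ 2) / (2 * M ^ 2))) ^ 2
        + D ^ 2 * ((2 * M * l2 - D ^ 2) / (2 * M ^ 2)))
      = 2 * M * Real.sqrt l2 / (D * Real.sqrt (4 * M * l2 - D ^ 2)) := by
  have h4 : 0 < 4 * M * l2 - D ^ 2 := by nlinarith
  have hh : (l2 - M * ((2 * M * l2 - D ^ 2) / (2 * M ^ 2))) ^ 2
      + D ^ 2 * ((2 * M * l2 - D ^ 2) / (2 * M ^ 2))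
      = (D * Real.sqrt (4 * M * l2 - D ^ 2) / (2 * M)) ^ 2 := by
    rw [div_pow, mul_pow, Real.sq_sqrt h4.le]
    field_simp
    ring
  rw [hh, Real.sqrt_sq (by positivity)]
  rw [div_div_eq_mul_div]
  ring_nf

lemma boundary_val {M D l2 : ℝ} (hM : 0 < M) (hD : 0 < D) (h2 : 0 < l2)
    (hb : D ^ 2 = 2 * M * l2) :
    2 * M * Real.sqrt l2 / (D * Real.sqrt (4 * M * l2 - D ^ 2)) = 1 / Real.sqrt l2 := by
  have : 4 * M * l2 - D ^ 2 = D ^ 2 := by rw [hb]; ring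
  rw [this, Real.sqrt_sq hD.le]
  have hs : Real.sqrt l2 * Real.sqrt l2 = l2 := Real.mul_self_sqrt h2.le
  have hs0 : Real.sqrt l2 ≠ 0 := by positivity
  rw [div_eq_div_iff (by positivity) (by positivity), one_mul]
  nlinarith [hs]

lemma f_tendsto {M D l2 : ℝ} (h2 : 0 < l2) :
    Filter.Tendsto (fun ω : ℝ => Real.sqrt l2 /
        Real.sqrt ((l2 - M * ω ^ 2) ^ 2 + D ^ 2 * ω ^ 2))
      (nhdsWithin 0 {0}ᶜ) (nhds (1 / Real.sqrt l2)) := by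
  have hc : ContinuousAt (fun ω : ℝ => Real.sqrt l2 /
      Real.sqrt ((l2 - M * ω ^ 2) ^ 2 + D ^ 2 * ω ^ 2)) 0 := by
    apply ContinuousAt.div continuousAt_const
    · exact (Real.continuous_sqrt.comp (by continuity)).continuousAt
    · rw [show (l2 - M * (0:ℝ) ^ 2) ^ 2 + D ^ 2 * (0:ℝ) ^ 2 = l2 ^ 2 by ring,
        Real.sqrt_sq h2.le]
      exact h2.ne'
  have h0 : (fun ω : ℝ => Real.sqrt l2 / Real.sqrt ((l2 - M * ω ^ 2) ^ 2 + D ^ 2 * ω ^ 2)) 0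
      = 1 / Real.sqrt l2 := by
    simp only
    rw [show (l2 - M * (0:ℝ) ^ 2) ^ 2 + D ^ 2 * (0:ℝ) ^ 2 = l2 ^ 2 by ring, Real.sqrt_sq h2.le]
    rw [div_eq_div_iff (by positivity) (by positivity), Real.mul_self_sqrt h2.le, one_mul]
  exact h0 ▸ hc.continuousWithinAt.tendsto

set_option maxHeartbeats 2000000 in
/-- H∞ norm of the swing dynamics with phase cohesiveness output.  Let `L` be
symmetric positive semidefinite with orthogonal eigendecomposition
`L = V diag(λ) Vᵀ`, eigenvalues sorted as `0 = λ₁ < λ₂ ≤ … ≤ λ_n`, and let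
`L^{1/2}` be its positive semidefinite square root.  Then
`sup_{ω ≠ 0} ‖L^{1/2}(−Mω²I + jDωI + L)⁻¹‖` equals
`2M√λ₂/(D√(4Mλ₂ − D²))` if `D² ≤ 2Mλ₂`, and `1/√λ₂` otherwise. -/
theorem swing_phase_Hinf_norm (n : ℕ) (M D : ℝ) (hM : 0 < M) (hD : 0 < D)
    (L V : Matrix (Fin (n + 2)) (Fin (n + 2)) ℝ) (hL : L.PosSemidef)
    (lam : Fin (n + 2) → ℝ) (hmono : Monotone lam) (h0 : lam 0 = 0)
    (h1 : 0 < lam 1) (hV : Vᵀ * V = 1)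
    (hdec : L = V * Matrix.diagonal lam * Vᵀ) :
    (⨆ ω : {ω : ℝ // ω ≠ 0},
      ‖Matrix.toEuclideanCLM (𝕜 := ℂ)
          (hL.sqrt.map Complex.ofReal *
            (((-(M * (ω : ℝ) ^ 2) : ℂ) + Complex.I * (D : ℂ) * ((ω : ℝ) : ℂ)) •
                (1 : Matrix (Fin (n + 2)) (Fin (n + 2)) ℂ) +
              L.map Complex.ofReal)⁻¹)‖) =
      if D ^ 2 ≤ 2 * M * lam 1 then
        2 * M * Real.sqrt (lam 1) / (D * Real.sqrt (4 * M * lam 1 - D ^ 2))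
      else 1 / Real.sqrt (lam 1) := by
  have hnn : ∀ i, 0 ≤ lam i := fun i => h0 ▸ hmono (Fin.zero_le i)
  have hlam1 : ∀ i : Fin (n + 2), i ≠ 0 → lam 1 ≤ lam i := by
    intro i hi
    refine hmono ?_
    rw [Fin.le_def, Fin.val_one]
    have hv : i.val ≠ 0 := fun h => hi (Fin.ext (by simpa using h))
    omega
  -- square root of L
  have hsd : (V * Matrix.diagonal (fun i => Real.sqrt (lam i)) * Vᵀ).PosSemidef := by
    have hd : (Matrix.diagonal (fun i => Real.sqrt (lam i)) :
        Matrix (Fin (n + 2)) (Fin (n + 2)) ℝ).PosSemidef :=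
      Matrix.posSemidef_diagonal_iff.mpr fun i => Real.sqrt_nonneg _
    have := hd.mul_mul_conjTranspose_same V
    rwa [Matrix.conjTranspose_eq_transpose_of_trivial] at this
  have hsqrt : hL.sqrt = V * Matrix.diagonal (fun i => Real.sqrt (lam i)) * Vᵀ := by
    refine (psd_eq_sqrt_of_sq_eq hsd hL ?_).symm
    rw [pow_two, conj_mul_conj _ _ _ _ hV, Matrix.diagonal_mul_diagonal]
    rw [show (fun i => Real.sqrt (lam i) * Real.sqrt (lam i)) = lam from
      funext fun i => Real.mul_self_sqrt (hnn i)]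
    exact hdec.symm
  -- complexification
  set W : Matrix (Fin (n + 2)) (Fin (n + 2)) ℂ := V.map Complex.ofReal with hW
  have hWs : star W = Vᵀ.map Complex.ofReal := by
    rw [Matrix.star_eq_conjTranspose]
    ext i j
    simp [hW, Matrix.conjTranspose_apply, Matrix.map_apply, Complex.conj_ofReal]
  have hmapmul : ∀ A B : Matrix (Fin (n + 2)) (Fin (n + 2)) ℝ,
      (A * B).map Complex.ofReal = A.map Complex.ofReal * B.map Complex.ofReal :=
    fun A B => Matrix.map_mul (f := Complex.ofRealHom)
  have hW1 : star W * W = 1 := by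
    rw [hWs, hW, ← hmapmul, hV, Matrix.map_one _ Complex.ofReal_zero Complex.ofReal_one]
  have hWW : W * star W = 1 := mul_eq_one_comm.mp hW1
  have hdiagmap : ∀ f : Fin (n + 2) → ℝ,
      (Matrix.diagonal f).map Complex.ofReal = Matrix.diagonal (fun i => (f i : ℂ)) :=
    fun f => Matrix.diagonal_map Complex.ofReal_zero
  have hLmap : L.map Complex.ofReal
      = W * Matrix.diagonal (fun i => (lam i : ℂ)) * star W := by
    rw [hdec, hmapmul, hmapmul, hdiagmap, hWs]
  have hSmap : hL.sqrt.map Complex.ofReal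
      = W * Matrix.diagonal (fun i => (Real.sqrt (lam i) : ℂ)) * star W := by
    rw [hsqrt, hmapmul, hmapmul, hdiagmap, hWs]
  -- the norm at each frequency
  have hmain : ∀ (ω : ℝ), ω ≠ 0 →
      ‖Matrix.toEuclideanCLM (𝕜 := ℂ)
          (hL.sqrt.map Complex.ofReal *
            (((-(M * ω ^ 2) : ℂ) + Complex.I * (D : ℂ) * (ω : ℂ)) •
                (1 : Matrix (Fin (n + 2)) (Fin (n + 2)) ℂ) +
              L.map Complex.ofReal)⁻¹)‖
        = ‖Matrix.toEuclideanCLM (𝕜 := ℂ) (Matrix.diagonal (fun i =>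
            (Real.sqrt (lam i) : ℂ) *
              ((((-(M * ω ^ 2) : ℂ) + Complex.I * (D : ℂ) * (ω : ℂ)) + lam i)⁻¹)))‖ := by
    intro ω hω
    set a : ℂ := (-(M * ω ^ 2) : ℂ) + Complex.I * (D : ℂ) * (ω : ℂ) with ha
    have hdne : ∀ i, a + (lam i : ℂ) ≠ 0 := by
      intro i hzero
      have him := congrArg Complex.im hzero
      simp [ha, ← Complex.ofReal_pow] at him
      rcases him with h | h
      exacts [hD.ne' h, hω h]
    have hdg : Matrix.diagonal (fun i => a + (lam i : ℂ))
        = a • 1 + Matrix.diagonal (fun i => (lam i : ℂ)) := by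
      rw [Matrix.smul_one_eq_diagonal, Matrix.diagonal_add]
    have hmat : a • (1 : Matrix (Fin (n + 2)) (Fin (n + 2)) ℂ) + L.map Complex.ofReal
        = W * Matrix.diagonal (fun i => a + (lam i : ℂ)) * star W := by
      rw [hLmap, hdg, Matrix.mul_add, Matrix.add_mul, Matrix.mul_smul, Matrix.mul_one,
        Matrix.smul_mul, hWW]
    have hinv : (a • (1 : Matrix (Fin (n + 2)) (Fin (n + 2)) ℂ) + L.map Complex.ofReal)⁻¹
        = W * Matrix.diagonal (fun i => (a + (lam i : ℂ))⁻¹) * star W := by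
      rw [hmat]
      apply Matrix.inv_eq_right_inv
      rw [conj_mul_conj _ _ _ _ hW1, Matrix.diagonal_mul_diagonal]
      rw [show (fun i => (a + (lam i : ℂ)) * (a + (lam i : ℂ))⁻¹) = fun _ => (1 : ℂ) from
        funext fun i => mul_inv_cancel₀ (hdne i)]
      rw [Matrix.diagonal_one, Matrix.mul_one, hWW]
    rw [hinv, hSmap, conj_mul_conj _ _ _ _ hW1, Matrix.diagonal_mul_diagonal]
    exact conj_opNorm_eq W _ hW1 hWW
  -- value of diagonal entries
  have hval : ∀ (ω : ℝ) (i : Fin (n + 2)),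
      ‖(Real.sqrt (lam i) : ℂ) *
          ((((-(M * ω ^ 2) : ℂ) + Complex.I * (D : ℂ) * (ω : ℂ)) + lam i)⁻¹)‖
        = Real.sqrt (lam i) / Real.sqrt ((lam i - M * ω ^ 2) ^ 2 + D ^ 2 * ω ^ 2) := by
    intro ω i
    rw [norm_mul, norm_inv]
    have hrw : (((-(M * ω ^ 2) : ℂ) + Complex.I * (D : ℂ) * (ω : ℂ)) + lam i)
        = ((lam i - M * ω ^ 2 : ℝ) : ℂ) + ((D * ω : ℝ) : ℂ) * Complex.I := by
      push_cast
      ring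
    rw [hrw, Complex.norm_real, Real.norm_eq_abs, Complex.norm_add_mul_I,
      abs_of_nonneg (Real.sqrt_nonneg _),
      show (D * ω) ^ 2 = D ^ 2 * ω ^ 2 by ring, div_eq_mul_inv]
  set cval : ℝ := (if D ^ 2 ≤ 2 * M * lam 1 then
      2 * M * Real.sqrt (lam 1) / (D * Real.sqrt (4 * M * lam 1 - D ^ 2))
    else 1 / Real.sqrt (lam 1)) with hcval
  have hcpos : 0 < cval := by
    rw [hcval]
    split_ifs with hb
    · have h4 : 0 < 4 * M * lam 1 - D ^ 2 := by nlinarith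
      positivity
    · positivity
  have hub : ∀ ω : ℝ, ω ≠ 0 →
      ‖Matrix.toEuclideanCLM (𝕜 := ℂ)
          (hL.sqrt.map Complex.ofReal *
            (((-(M * ω ^ 2) : ℂ) + Complex.I * (D : ℂ) * (ω : ℂ)) •
                (1 : Matrix (Fin (n + 2)) (Fin (n + 2)) ℂ) +
              L.map Complex.ofReal)⁻¹)‖ ≤ cval := by
    intro ω hω
    rw [hmain ω hω]
    refine diag_opNorm_le _ _ hcpos.le fun i => ?_
    rw [hval]
    by_cases hi : i = 0
    · subst hi
      rw [h0, Real.sqrt_zero, zero_div]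
      exact hcpos.le
    · have hx : 0 < ω ^ 2 := lt_of_le_of_ne (sq_nonneg ω) (Ne.symm (pow_ne_zero 2 hω))
      rw [hcval]
      exact key_upper hM hD h1 (hlam1 i hi) hx
  have hlb : ∀ ω : ℝ, ω ≠ 0 →
      Real.sqrt (lam 1) / Real.sqrt ((lam 1 - M * ω ^ 2) ^ 2 + D ^ 2 * ω ^ 2) ≤
      ‖Matrix.toEuclideanCLM (𝕜 := ℂ)
          (hL.sqrt.map Complex.ofReal *
            (((-(M * ω ^ 2) : ℂ) + Complex.I * (D : ℂ) * (ω : ℂ)) •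
                (1 : Matrix (Fin (n + 2)) (Fin (n + 2)) ℂ) +
              L.map Complex.ofReal)⁻¹)‖ := by
    intro ω hω
    rw [hmain ω hω, ← hval ω 1]
    exact diag_opNorm_ge (fun i => (Real.sqrt (lam i) : ℂ) *
      ((((-(M * ω ^ 2) : ℂ) + Complex.I * (D : ℂ) * (ω : ℂ)) + lam i)⁻¹)) 1
  haveI : Nonempty {ω : ℝ // ω ≠ 0} := ⟨⟨1, one_ne_zero⟩⟩
  refine le_antisymm (ciSup_le fun ω => hub ω ω.2) ?_
  have hne : (Set.range fun ω : {ω : ℝ // ω ≠ 0} =>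
      ‖Matrix.toEuclideanCLM (𝕜 := ℂ)
          (hL.sqrt.map Complex.ofReal *
            (((-(M * (ω : ℝ) ^ 2) : ℂ) + Complex.I * (D : ℂ) * ((ω : ℝ) : ℂ)) •
                (1 : Matrix (Fin (n + 2)) (Fin (n + 2)) ℂ) +
              L.map Complex.ofReal)⁻¹)‖).Nonempty :=
    ⟨_, Set.mem_range_self (⟨1, one_ne_zero⟩ : {ω : ℝ // ω ≠ 0})⟩
  have hbdd : BddAbove (Set.range fun ω : {ω : ℝ // ω ≠ 0} =>
      ‖Matrix.toEuclideanCLM (𝕜 := ℂ)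
          (hL.sqrt.map Complex.ofReal *
            (((-(M * (ω : ℝ) ^ 2) : ℂ) + Complex.I * (D : ℂ) * ((ω : ℝ) : ℂ)) •
                (1 : Matrix (Fin (n + 2)) (Fin (n + 2)) ℂ) +
              L.map Complex.ofReal)⁻¹)‖) := by
    refine ⟨cval, ?_⟩
    rintro x ⟨ω, rfl⟩
    exact hub ω ω.2
  refine (le_csSup_iff hbdd hne).mpr fun b hb => ?_
  have hfb : ∀ ω : ℝ, ω ≠ 0 →
      Real.sqrt (lam 1) / Real.sqrt ((lam 1 - M * ω ^ 2) ^ 2 + D ^ 2 * ω ^ 2) ≤ b :=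
    fun ω hω => le_trans (hlb ω hω)
      (hb (Set.mem_range_self (⟨ω, hω⟩ : {ω : ℝ // ω ≠ 0})))
  rcases lt_or_ge (D ^ 2) (2 * M * lam 1) with hlt | hge
  · have hx0pos : 0 < (2 * M * lam 1 - D ^ 2) / (2 * M ^ 2) :=
      div_pos (by nlinarith) (by positivity)
    have hω0 : Real.sqrt ((2 * M * lam 1 - D ^ 2) / (2 * M ^ 2)) ≠ 0 :=
      ne_of_gt (Real.sqrt_pos.mpr hx0pos)
    have hsq : (Real.sqrt ((2 * M * lam 1 - D ^ 2) / (2 * M ^ 2))) ^ 2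
        = (2 * M * lam 1 - D ^ 2) / (2 * M ^ 2) := Real.sq_sqrt hx0pos.le
    have hfo := hfb _ hω0
    rw [hsq] at hfo
    rw [hcval, if_pos hlt.le]
    calc 2 * M * Real.sqrt (lam 1) / (D * Real.sqrt (4 * M * lam 1 - D ^ 2))
        = Real.sqrt (lam 1) / Real.sqrt
            ((lam 1 - M * ((2 * M * lam 1 - D ^ 2) / (2 * M ^ 2))) ^ 2
              + D ^ 2 * ((2 * M * lam 1 - D ^ 2) / (2 * M ^ 2))) :=
          (f_at_opt hM hD h1 hlt).symm
      _ ≤ b := hfo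
  · have hcv : (if D ^ 2 ≤ 2 * M * lam 1 then
        2 * M * Real.sqrt (lam 1) / (D * Real.sqrt (4 * M * lam 1 - D ^ 2))
      else 1 / Real.sqrt (lam 1)) = 1 / Real.sqrt (lam 1) := by
      split_ifs with hb2
      · exact boundary_val hM hD h1 (le_antisymm hb2 hge)
      · rfl
    rw [hcval, hcv]
    refine le_of_tendsto (f_tendsto (M := M) (D := D) h1) ?_
    filter_upwards [self_mem_nhdsWithin] with ω hω
    exact hfb ω (Set.mem_compl_singleton_iff.mp hω)
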